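/- Let d ≥ 3. There exists a constant C' > 0, depending only on d and L, such that for every N ≥ 0 and every proper embedding 𝒯 ∈ Λ_N, with A = ∪_{m ∈ T_(N)} B(𝒯(m), 2L), the sum over all unordered pairs of distinct points u, v ∈ A of |u − v|^{2−d} is at most C' · 2^N. -/

import Mathlib

/-!
STATEMENT 6: Let `d ≥ 3`. There is a constant `C' > 0`, depending only on `d` and `L`,
such that for every `N ≥ 0` and every proper embedding `𝒯 ∈ Λ_N`, with
`A = ∪_{m ∈ T_(N)} B(𝒯(m), 2L)`, the sum over all unordered pairs of distinct points
`u, v ∈ A` of `|u − v|^(2−d)` is at most `C' · 2^N`.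

The sum over unordered pairs of distinct points equals half of the sum over ordered
pairs `(u,v) ∈ A × A` with `u ≠ v` (the summand is symmetric in `u, v`), which is how
it is expressed below; the (finite) sum is expressed with `finsum` (`∑ᶠ`), and
`|u − v|^(2−d)` is the real number `(normInf (u-v) : ℝ) ^ ((2 : ℤ) - d)`.
-/

/-- The `ℓ∞` norm of a point of `ℤ^d`, as a natural number. -/
def normInf {d : ℕ} (x : Fin d → ℤ) : ℕ := Finset.univ.sup fun i => (x i).natAbs

/-- The `ℓ∞`-ball `B(x, r)` in `ℤ^d`. -/
def box {d : ℕ} (x : Fin d → ℤ) (r : ℕ) : Set (Fin d → ℤ) := {y | normInf (y - x) ≤ r}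

/-- Proper embedding of the binary tree `T_N` of height `N` (scale parameter `L`). -/
def IsProperEmbedding (d L N : ℕ) (T : List Bool → (Fin d → ℤ)) : Prop :=
  T [] = 0 ∧
  (∀ m : List Bool, m.length ≤ N → ∀ i : Fin d,
      ((6 ^ (N - m.length) * L : ℕ) : ℤ) ∣ T m i) ∧
  ∀ m : List Bool, m.length < N →
    normInf (T (m ++ [false]) - T m) = 6 ^ (N - m.length) * L ∧
    normInf (T (m ++ [true]) - T m) = 2 * (6 ^ (N - m.length) * L)

/-- The union `A = ∪_{m ∈ T_(N)} B(𝒯(m), 2L)` over the leaves of `T_N`. -/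
def leafBoxes (d L N : ℕ) (T : List Bool → (Fin d → ℤ)) : Set (Fin d → ℤ) :=
  ⋃ m ∈ {m : List Bool | m.length = N}, box (T m) (2 * L)

namespace P6
variable {d : ℕ}

lemma normInf_le_iff {x : Fin d → ℤ} {r : ℕ} : normInf x ≤ r ↔ ∀ i, (x i).natAbs ≤ r := by
  simp [normInf, Finset.sup_le_iff]

lemma coord_le_normInf (x : Fin d → ℤ) (i : Fin d) : (x i).natAbs ≤ normInf x :=
  Finset.le_sup (f := fun i => (x i).natAbs) (Finset.mem_univ i)

lemma normInf_add_le (x y : Fin d → ℤ) : normInf (x + y) ≤ normInf x + normInf y := by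
  rw [normInf_le_iff]
  intro i
  calc ((x + y) i).natAbs = (x i + y i).natAbs := rfl
    _ ≤ (x i).natAbs + (y i).natAbs := Int.natAbs_add_le _ _
    _ ≤ _ := add_le_add (coord_le_normInf x i) (coord_le_normInf y i)

lemma normInf_sub_le (x y : Fin d → ℤ) : normInf (x - y) ≤ normInf x + normInf y := by
  have : normInf (x - y) ≤ normInf x + normInf (-y) := by
    simpa [sub_eq_add_neg] using normInf_add_le x (-y)
  simpa [normInf] using this

lemma normInf_neg (x : Fin d → ℤ) : normInf (-x) = normInf x := by
  simp [normInf]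

lemma normInf_pos {x : Fin d → ℤ} (h : x ≠ 0) : 1 ≤ normInf x := by
  rcases Function.ne_iff.1 h with ⟨i, hi⟩
  have := coord_le_normInf x i
  have : 1 ≤ (x i).natAbs := by
    simp only [Pi.zero_apply] at hi; omega
  omega

lemma normInf_pos' {x : Fin d → ℤ} (h : x ≠ 0) : 1 ≤ normInf x := by
  rcases Function.ne_iff.1 h with ⟨i, hi⟩
  have h1 := coord_le_normInf x i
  have h2 : 1 ≤ (x i).natAbs := by
    simp only [Pi.zero_apply] at hi; omega
  omega

noncomputable def boxF (x : Fin d → ℤ) (r : ℕ) : Finset (Fin d → ℤ) :=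
  Fintype.piFinset fun i => Finset.Icc (x i - r) (x i + r)

lemma mem_boxF {x u : Fin d → ℤ} {r : ℕ} : u ∈ boxF x r ↔ normInf (u - x) ≤ r := by
  simp only [boxF, Fintype.mem_piFinset, Finset.mem_Icc, normInf_le_iff, Pi.sub_apply]
  constructor <;> intro h i <;> have := h i <;> omega

lemma card_boxF (x : Fin d → ℤ) (r : ℕ) : (boxF x r).card = (2 * r + 1) ^ d := by
  rw [boxF, Fintype.card_piFinset]
  have : ∀ i : Fin d, (Finset.Icc (x i - r) (x i + r)).card = 2 * r + 1 := by
    intro i; rw [Int.card_Icc]; omega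
  simp [this]

def leavesF (N : ℕ) : Finset (List Bool) :=
  (Finset.univ : Finset (Fin N → Bool)).image fun f => List.ofFn f

lemma mem_leavesF {N : ℕ} {m : List Bool} : m ∈ leavesF N ↔ m.length = N := by
  simp only [leavesF, Finset.mem_image, Finset.mem_univ, true_and]
  constructor
  · rintro ⟨f, rfl⟩; simp
  · intro h; subst h; exact ⟨m.get, by simp⟩

lemma card_leavesF (N : ℕ) : (leavesF N).card ≤ 2 ^ N := by
  calc (leavesF N).card ≤ (Finset.univ : Finset (Fin N → Bool)).card :=
        Finset.card_image_le
    _ = 2 ^ N := by simp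

noncomputable def AF (d L N : ℕ) (T : List Bool → (Fin d → ℤ)) : Finset (Fin d → ℤ) :=
  (leavesF N).biUnion fun m => boxF (T m) (2 * L)

lemma coe_AF (d L N : ℕ) (T : List Bool → (Fin d → ℤ)) :
    leafBoxes d L N T = (AF d L N T : Set (Fin d → ℤ)) := by
  ext u
  simp [leafBoxes, box, AF, mem_leavesF, mem_boxF, Set.mem_iUnion]

lemma card_AF (d L N : ℕ) (T : List Bool → (Fin d → ℤ)) :
    (AF d L N T).card ≤ 2 ^ N * (4 * L + 1) ^ d := by
  calc (AF d L N T).card ≤ ∑ m ∈ leavesF N, (boxF (T m) (2 * L)).card :=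
        Finset.card_biUnion_le
    _ ≤ ∑ _m ∈ leavesF N, (4 * L + 1) ^ d := by
        refine Finset.sum_le_sum fun m _ => ?_
        rw [card_boxF]; ring_nf; exact le_refl _
    _ = (leavesF N).card * (4 * L + 1) ^ d := by rw [Finset.sum_const, smul_eq_mul]
    _ ≤ 2 ^ N * (4 * L + 1) ^ d := by
        exact Nat.mul_le_mul_right _ (card_leavesF N)

def subT {d : ℕ} (T : List Bool → (Fin d → ℤ)) (b : Bool) : List Bool → (Fin d → ℤ) :=
  fun m => T (b :: m) - T [b]

lemma subT_proper {L N : ℕ} {T : List Bool → (Fin d → ℤ)} (b : Bool)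
    (h : IsProperEmbedding d L (N + 1) T) : IsProperEmbedding d L N (subT T b) := by
  obtain ⟨h0, hdvd, hstep⟩ := h
  refine ⟨by simp [subT], ?_, ?_⟩
  · intro m hm i
    have h1 := hdvd (b :: m) (by simpa using hm) i
    have h2 := hdvd [b] (by simp) i
    have e1 : N + 1 - (b :: m).length = N - m.length := by simp
    rw [e1] at h1
    have e2 : N + 1 - ([b] : List Bool).length = N := by simp
    rw [e2] at h2
    have hd36 : ((6 ^ (N - m.length) * L : ℕ) : ℤ) ∣ ((6 ^ N * L : ℕ) : ℤ) := by
      exact_mod_cast Nat.mul_dvd_mul_right (pow_dvd_pow 6 (by omega)) L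
    show ((6 ^ (N - m.length) * L : ℕ) : ℤ) ∣ T (b :: m) i - T [b] i
    exact dvd_sub h1 (hd36.trans h2)
  · intro m hm
    have h1 := hstep (b :: m) (by simpa using hm)
    have e : N + 1 - (b :: m).length = N - m.length := by simp
    rw [e] at h1
    have e2 : ∀ c : Bool, subT T b (m ++ [c]) - subT T b m = T ((b :: m) ++ [c]) - T (b :: m) := by
      intro c
      show (T (b :: (m ++ [c])) - T [b]) - (T (b :: m) - T [b]) = _
      rw [sub_sub_sub_cancel_right]
      rfl
    rw [e2 false, e2 true]
    exact h1

def rad (L : ℕ) : ℕ → ℕ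
  | 0 => 2 * L
  | (N + 1) => rad L N + 2 * (6 ^ (N + 1) * L)

lemma rad_le (L N : ℕ) : 5 * rad L N ≤ 2 * (6 ^ (N + 1) * L) := by
  induction N with
  | zero => simp [rad]; omega
  | succ N ih =>
    have h : (6 : ℕ) ^ (N + 2) * L = 6 * (6 ^ (N + 1) * L) := by ring
    rw [rad, h]
    omega

lemma root_child_norm {L N : ℕ} {T : List Bool → (Fin d → ℤ)}
    (h : IsProperEmbedding d L (N + 1) T) (b : Bool) :
    normInf (T [b]) ≤ 2 * (6 ^ (N + 1) * L) := by
  obtain ⟨h0, _, hstep⟩ := h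
  have h1 := hstep [] (by simp)
  simp only [List.nil_append, List.length_nil, Nat.sub_zero, h0, sub_zero] at h1
  cases b
  · rw [h1.1]; omega
  · rw [h1.2]

lemma root_children_dist {L N : ℕ} {T : List Bool → (Fin d → ℤ)}
    (h : IsProperEmbedding d L (N + 1) T) :
    6 ^ (N + 1) * L ≤ normInf (T [false] - T [true]) := by
  obtain ⟨h0, _, hstep⟩ := h
  have h1 := hstep [] (by simp)
  simp only [List.nil_append, List.length_nil, Nat.sub_zero, h0, sub_zero] at h1
  have htri : normInf (T [true]) ≤ normInf (T [true] - T [false]) + normInf (T [false]) := by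
    have := normInf_add_le (T [true] - T [false]) (T [false])
    simpa using this
  have hneg : normInf (T [false] - T [true]) = normInf (T [true] - T [false]) := by
    have : T [false] - T [true] = -(T [true] - T [false]) := by abel
    rw [this, normInf_neg]
  rw [h1.1, h1.2] at *
  omega

lemma mem_AF_succ {L N : ℕ} {T : List Bool → (Fin d → ℤ)} {u : Fin d → ℤ} :
    u ∈ AF d L (N + 1) T ↔ ∃ b : Bool, u - T [b] ∈ AF d L N (subT T b) := by
  simp only [AF, Finset.mem_biUnion, mem_leavesF, mem_boxF, subT]
  constructor
  · rintro ⟨m, hm, hu⟩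
    match m, hm with
    | b :: s, hm =>
      refine ⟨b, s, by simpa using hm, ?_⟩
      rw [sub_sub_sub_cancel_right]
      exact hu
  · rintro ⟨b, s, hs, hu⟩
    refine ⟨b :: s, by simpa using hs, ?_⟩
    rw [sub_sub_sub_cancel_right] at hu
    exact hu

lemma normInf_le_rad {L : ℕ} : ∀ (N : ℕ) (T : List Bool → (Fin d → ℤ)),
    IsProperEmbedding d L N T → ∀ u ∈ AF d L N T, normInf u ≤ rad L N := by
  intro N
  induction N with
  | zero =>
    intro T hT u hu
    simp only [AF, Finset.mem_biUnion, mem_leavesF, mem_boxF] at hu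
    obtain ⟨m, hm, hu⟩ := hu
    have hm' : m = [] := List.length_eq_zero_iff.mp hm
    subst hm'
    rw [hT.1, sub_zero] at hu
    simpa [rad] using hu
  | succ N ih =>
    intro T hT u hu
    obtain ⟨b, hb⟩ := mem_AF_succ.mp hu
    have h1 := ih (subT T b) (subT_proper b hT) _ hb
    have h2 := root_child_norm hT b
    have h3 : normInf u ≤ normInf (u - T [b]) + normInf (T [b]) := by
      have := normInf_add_le (u - T [b]) (T [b])
      simpa using this
    show normInf u ≤ rad L N + 2 * (6 ^ (N + 1) * L)
    omega

lemma gap {L N : ℕ} {T : List Bool → (Fin d → ℤ)} (hT : IsProperEmbedding d L (N + 1) T)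
    {u v : Fin d → ℤ} (hu : u - T [false] ∈ AF d L N (subT T false))
    (hv : v - T [true] ∈ AF d L N (subT T true)) :
    6 ^ (N + 1) * L ≤ 5 * normInf (u - v) := by
  have h1 := normInf_le_rad N _ (subT_proper false hT) _ hu
  have h2 := normInf_le_rad N _ (subT_proper true hT) _ hv
  have h3 := root_children_dist hT
  have h4 := rad_le L N
  have key : normInf (T [false] - T [true]) ≤
      normInf (u - v) + (normInf (u - T [false]) + normInf (v - T [true])) := by
    have e : T [false] - T [true] = (u - v) - ((u - T [false]) - (v - T [true])) := by abel
    rw [e]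
    calc normInf ((u - v) - ((u - T [false]) - (v - T [true])))
        ≤ normInf (u - v) + normInf ((u - T [false]) - (v - T [true])) := normInf_sub_le _ _
      _ ≤ _ := by
          have := normInf_sub_le (u - T [false]) (v - T [true])
          omega
  omega

lemma f_le {n c : ℕ} (hd : 3 ≤ d) (hc : 1 ≤ c) (h : c ≤ n) :
    (n : ℝ) ^ ((2 : ℤ) - (d : ℤ)) ≤ (c : ℝ)⁻¹ := by
  have hn1 : (1 : ℝ) ≤ (n : ℝ) := by exact_mod_cast hc.trans h
  have hc0 : (0 : ℝ) < c := by exact_mod_cast hc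
  have e : ((2 : ℤ) - (d : ℤ)) = -((d - 2 : ℕ) : ℤ) := by
    have : ((d - 2 : ℕ) : ℤ) = (d : ℤ) - 2 := by omega
    rw [this]; ring
  rw [e, zpow_neg, zpow_natCast]
  have hcn : (c : ℝ) ≤ (n : ℝ) ^ (d - 2) := by
    calc (c : ℝ) ≤ (n : ℝ) := by exact_mod_cast h
      _ ≤ (n : ℝ) ^ (d - 2) := le_self_pow₀ hn1 (by omega)
  exact inv_anti₀ hc0 hcn

lemma f_le' {n m : ℕ} (hd : 3 ≤ d) (hm : 6 ≤ m) (h : m ≤ 5 * n) :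
    (n : ℝ) ^ ((2 : ℤ) - (d : ℤ)) ≤ 5 / (m : ℝ) := by
  have hn : 2 ≤ n := by omega
  have hm0 : (0 : ℝ) < m := by positivity
  have hn0 : (0 : ℝ) < n := by exact_mod_cast (by omega : 0 < n)
  calc (n : ℝ) ^ ((2 : ℤ) - (d : ℤ)) ≤ ((n : ℕ) : ℝ)⁻¹ := f_le hd (by omega) le_rfl
    _ ≤ 5 / (m : ℝ) := by
        rw [inv_eq_one_div, div_le_div_iff₀ hn0 hm0]
        have : (m : ℝ) ≤ 5 * n := by exact_mod_cast h
        linarith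

lemma f_nonneg (n : ℕ) : (0 : ℝ) ≤ (n : ℝ) ^ ((2 : ℤ) - (d : ℤ)) :=
  zpow_nonneg (Nat.cast_nonneg n) _

noncomputable def fp (d : ℕ) (p : (Fin d → ℤ) × (Fin d → ℤ)) : ℝ :=
  (normInf (p.1 - p.2) : ℝ) ^ ((2 : ℤ) - (d : ℤ))

noncomputable def PF (d L N : ℕ) (T : List Bool → (Fin d → ℤ)) : Finset ((Fin d → ℤ) × (Fin d → ℤ)) :=
  (AF d L N T ×ˢ AF d L N T).filter fun p => p.1 ≠ p.2

lemma sum_union_le {α : Type*} [DecidableEq α] {s t : Finset α} {g : α → ℝ}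
    (hg : ∀ a, 0 ≤ g a) : ∑ a ∈ s ∪ t, g a ≤ ∑ a ∈ s, g a + ∑ a ∈ t, g a := by
  have h1 := Finset.sum_union_inter (s₁ := s) (s₂ := t) (f := g)
  have h2 : 0 ≤ ∑ a ∈ s ∩ t, g a := Finset.sum_nonneg fun a _ => hg a
  linarith

lemma filter_product_image {c : Fin d → ℤ} (S : Finset (Fin d → ℤ)) :
    ((S.image (· + c)) ×ˢ (S.image (· + c))).filter (fun p => p.1 ≠ p.2) =
      ((S ×ˢ S).filter fun p => p.1 ≠ p.2).image fun p => (p.1 + c, p.2 + c) := by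
  ext ⟨u, v⟩
  simp only [Finset.mem_filter, Finset.mem_product, Finset.mem_image, Prod.mk.injEq, Prod.exists]
  constructor
  · rintro ⟨⟨⟨a, ha, rfl⟩, ⟨b, hb, rfl⟩⟩, hne⟩
    exact ⟨a, b, ⟨⟨ha, hb⟩, fun h => hne (by rw [h])⟩, rfl, rfl⟩
  · rintro ⟨a, b, ⟨⟨ha, hb⟩, hne⟩, rfl, rfl⟩
    exact ⟨⟨⟨a, ha, rfl⟩, ⟨b, hb, rfl⟩⟩, fun h => hne (by simpa using h)⟩

lemma diag_sum {c : Fin d → ℤ} (S : Finset (Fin d → ℤ)) :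
    ∑ p ∈ ((S.image (· + c)) ×ˢ (S.image (· + c))).filter (fun p => p.1 ≠ p.2), fp d p =
      ∑ p ∈ (S ×ˢ S).filter (fun p => p.1 ≠ p.2), fp d p := by
  rw [filter_product_image]
  rw [Finset.sum_image]
  · refine Finset.sum_congr rfl fun p _ => ?_
    simp [fp]
  · intro p _ q _ h
    simp only [Prod.mk.injEq, add_left_inj] at h
    exact Prod.ext h.1 h.2

lemma card_PF (d L N : ℕ) (T : List Bool → (Fin d → ℤ)) :
    (PF d L N T).card ≤ (2 ^ N * (4 * L + 1) ^ d) * (2 ^ N * (4 * L + 1) ^ d) := by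
  calc (PF d L N T).card ≤ (AF d L N T ×ˢ AF d L N T).card := Finset.card_filter_le _ _
    _ = (AF d L N T).card * (AF d L N T).card := Finset.card_product _ _
    _ ≤ _ := Nat.mul_le_mul (card_AF d L N T) (card_AF d L N T)

set_option maxHeartbeats 2000000 in
lemma main (hd : 3 ≤ d) {L : ℕ} (hL : 1 ≤ L) :
    ∀ (N : ℕ) (T : List Bool → (Fin d → ℤ)), IsProperEmbedding d L N T →
      ∑ p ∈ PF d L N T, fp d p ≤
        (4 * 2 ^ N - 3) * (((4 * L + 1) ^ d : ℕ) : ℝ) ^ 2 := by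
  intro N
  induction N with
  | zero =>
    intro T hT
    have hterm : ∀ p ∈ PF d L 0 T, fp d p ≤ 1 := by
      intro p hp
      have hne : p.1 ≠ p.2 := (Finset.mem_filter.mp hp).2
      have h1 : 1 ≤ normInf (p.1 - p.2) := normInf_pos (sub_ne_zero.mpr hne)
      simpa [fp] using f_le hd le_rfl h1
    have hcard := card_PF d L 0 T
    calc ∑ p ∈ PF d L 0 T, fp d p ≤ (PF d L 0 T).card • (1 : ℝ) :=
          Finset.sum_le_card_nsmul _ _ _ hterm
      _ = ((PF d L 0 T).card : ℝ) := by simp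
      _ ≤ (((2 ^ 0 * (4 * L + 1) ^ d) * (2 ^ 0 * (4 * L + 1) ^ d) : ℕ) : ℝ) := by
          exact_mod_cast hcard
      _ ≤ (4 * 2 ^ 0 - 3) * (((4 * L + 1) ^ d : ℕ) : ℝ) ^ 2 := by push_cast; ring_nf; norm_num
  | succ N ih =>
    intro T hT
    have hprop0 := subT_proper false hT
    have hprop1 := subT_proper true hT
    set c0 := T [false] with hc0
    set c1 := T [true] with hc1
    set S0 := AF d L N (subT T false) with hS0
    set S1 := AF d L N (subT T true) with hS1
    set F0 := S0.image (· + c0) with hF0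
    set F1 := S1.image (· + c1) with hF1
    have hmemF0 : ∀ u ∈ F0, u - c0 ∈ S0 := by
      intro u hu
      obtain ⟨a, ha, rfl⟩ := Finset.mem_image.mp hu
      simpa using ha
    have hmemF1 : ∀ u ∈ F1, u - c1 ∈ S1 := by
      intro u hu
      obtain ⟨a, ha, rfl⟩ := Finset.mem_image.mp hu
      simpa using ha
    have hAF : AF d L (N + 1) T = F0 ∪ F1 := by
      ext u
      rw [Finset.mem_union, mem_AF_succ]
      constructor
      · rintro ⟨b, hb⟩
        cases b
        · exact Or.inl (Finset.mem_image.mpr ⟨u - c0, hb, by simp⟩)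
        · exact Or.inr (Finset.mem_image.mpr ⟨u - c1, hb, by simp⟩)
      · rintro (h | h)
        · exact ⟨false, hmemF0 u h⟩
        · exact ⟨true, hmemF1 u h⟩
    -- subset decomposition
    have hsub : PF d L (N + 1) T ⊆
        (((F0 ×ˢ F0).filter fun p => p.1 ≠ p.2) ∪ ((F1 ×ˢ F1).filter fun p => p.1 ≠ p.2)) ∪
        (((F0 ×ˢ F1).filter fun p => p.1 ≠ p.2) ∪ ((F1 ×ˢ F0).filter fun p => p.1 ≠ p.2)) := by
      intro p hp
      obtain ⟨hmem, hne⟩ := Finset.mem_filter.mp hp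
      obtain ⟨h1, h2⟩ := Finset.mem_product.mp hmem
      rw [hAF, Finset.mem_union] at h1 h2
      simp only [Finset.mem_union, Finset.mem_filter, Finset.mem_product]
      tauto
    have hfp0 : ∀ p : (Fin d → ℤ) × (Fin d → ℤ), 0 ≤ fp d p := fun p => f_nonneg _
    -- cross bounds
    have hcross01 : ∀ p ∈ (F0 ×ˢ F1).filter (fun p : (Fin d → ℤ) × (Fin d → ℤ) => p.1 ≠ p.2),
        fp d p ≤ 5 / (6 : ℝ) ^ (N + 1) := by
      intro p hp
      rw [Finset.mem_filter, Finset.mem_product] at hp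
      have hg := gap hT (hmemF0 _ hp.1.1) (hmemF1 _ hp.1.2)
      have h6 : (6 : ℕ) ≤ 6 ^ (N + 1) := by
        calc (6 : ℕ) = 6 ^ 1 := (pow_one 6).symm
          _ ≤ 6 ^ (N + 1) := Nat.pow_le_pow_right (by norm_num) (by omega)
      have h5 : 6 ^ (N + 1) ≤ 5 * normInf (p.1 - p.2) := by
        calc 6 ^ (N + 1) = 6 ^ (N + 1) * 1 := (mul_one _).symm
          _ ≤ 6 ^ (N + 1) * L := Nat.mul_le_mul_left _ hL
          _ ≤ _ := hg
      have := f_le' (n := normInf (p.1 - p.2)) (m := 6 ^ (N + 1)) hd h6 h5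
      simpa [fp] using this
    have hcross10 : ∀ p ∈ (F1 ×ˢ F0).filter (fun p : (Fin d → ℤ) × (Fin d → ℤ) => p.1 ≠ p.2),
        fp d p ≤ 5 / (6 : ℝ) ^ (N + 1) := by
      intro p hp
      rw [Finset.mem_filter, Finset.mem_product] at hp
      have hg := gap hT (hmemF0 _ hp.1.2) (hmemF1 _ hp.1.1)
      have hsym : normInf (p.1 - p.2) = normInf (p.2 - p.1) := by
        rw [← normInf_neg (p.2 - p.1), neg_sub]
      have h6 : (6 : ℕ) ≤ 6 ^ (N + 1) := by
        calc (6 : ℕ) = 6 ^ 1 := (pow_one 6).symm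
          _ ≤ 6 ^ (N + 1) := Nat.pow_le_pow_right (by norm_num) (by omega)
      have h5 : 6 ^ (N + 1) ≤ 5 * normInf (p.1 - p.2) := by
        rw [hsym]
        calc 6 ^ (N + 1) = 6 ^ (N + 1) * 1 := (mul_one _).symm
          _ ≤ 6 ^ (N + 1) * L := Nat.mul_le_mul_left _ hL
          _ ≤ _ := hg
      have := f_le' (n := normInf (p.1 - p.2)) (m := 6 ^ (N + 1)) hd h6 h5
      simpa [fp] using this
    -- cardinalities
    have hcardF0 : F0.card ≤ 2 ^ N * (4 * L + 1) ^ d :=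
      le_trans Finset.card_image_le (card_AF d L N _)
    have hcardF1 : F1.card ≤ 2 ^ N * (4 * L + 1) ^ d :=
      le_trans Finset.card_image_le (card_AF d L N _)
    set K : ℝ := (((4 * L + 1) ^ d : ℕ) : ℝ) with hK
    have hK0 : 0 ≤ K := Nat.cast_nonneg _
    have hMcard : ((2 ^ N * (4 * L + 1) ^ d : ℕ) : ℝ) = 2 ^ N * K := by
      rw [hK]; push_cast; ring
    have hcross_sum : ∀ (A B : Finset (Fin d → ℤ)), A.card ≤ 2 ^ N * (4 * L + 1) ^ d →
        B.card ≤ 2 ^ N * (4 * L + 1) ^ d →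
        (∀ p ∈ (A ×ˢ B).filter (fun p : (Fin d → ℤ) × (Fin d → ℤ) => p.1 ≠ p.2),
          fp d p ≤ 5 / (6 : ℝ) ^ (N + 1)) →
        ∑ p ∈ (A ×ˢ B).filter (fun p : (Fin d → ℤ) × (Fin d → ℤ) => p.1 ≠ p.2), fp d p ≤
          (2 ^ N * K) ^ 2 * (5 / 6 ^ (N + 1)) := by
      intro A B hA hB hb
      have hcard : (((A ×ˢ B).filter fun p : (Fin d → ℤ) × (Fin d → ℤ) => p.1 ≠ p.2).card : ℝ) ≤
          (2 ^ N * K) ^ 2 := by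
        have h1 : ((A ×ˢ B).filter fun p : (Fin d → ℤ) × (Fin d → ℤ) => p.1 ≠ p.2).card ≤
            (2 ^ N * (4 * L + 1) ^ d) * (2 ^ N * (4 * L + 1) ^ d) := by
          calc _ ≤ (A ×ˢ B).card := Finset.card_filter_le _ _
            _ = A.card * B.card := Finset.card_product _ _
            _ ≤ _ := Nat.mul_le_mul hA hB
        calc (((A ×ˢ B).filter fun p : (Fin d → ℤ) × (Fin d → ℤ) => p.1 ≠ p.2).card : ℝ)
            ≤ (((2 ^ N * (4 * L + 1) ^ d) * (2 ^ N * (4 * L + 1) ^ d) : ℕ) : ℝ) := by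
              exact_mod_cast h1
          _ = (2 ^ N * K) ^ 2 := by rw [hK]; push_cast; ring
      calc ∑ p ∈ (A ×ˢ B).filter (fun p : (Fin d → ℤ) × (Fin d → ℤ) => p.1 ≠ p.2), fp d p
          ≤ ((A ×ˢ B).filter (fun p : (Fin d → ℤ) × (Fin d → ℤ) => p.1 ≠ p.2)).card •
            (5 / (6 : ℝ) ^ (N + 1)) := Finset.sum_le_card_nsmul _ _ _ hb
        _ = (((A ×ˢ B).filter (fun p : (Fin d → ℤ) × (Fin d → ℤ) => p.1 ≠ p.2)).card : ℝ) *
            (5 / 6 ^ (N + 1)) := by rw [nsmul_eq_mul]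
        _ ≤ (2 ^ N * K) ^ 2 * (5 / 6 ^ (N + 1)) := by
            apply mul_le_mul_of_nonneg_right hcard
            positivity
    -- assemble
    have hdiag0 : ∑ p ∈ (F0 ×ˢ F0).filter (fun p : (Fin d → ℤ) × (Fin d → ℤ) => p.1 ≠ p.2),
        fp d p ≤ (4 * 2 ^ N - 3) * K ^ 2 := by
      rw [hF0, diag_sum]
      exact ih (subT T false) hprop0
    have hdiag1 : ∑ p ∈ (F1 ×ˢ F1).filter (fun p : (Fin d → ℤ) × (Fin d → ℤ) => p.1 ≠ p.2),
        fp d p ≤ (4 * 2 ^ N - 3) * K ^ 2 := by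
      rw [hF1, diag_sum]
      exact ih (subT T true) hprop1
    have hstep1 : ∑ p ∈ PF d L (N + 1) T, fp d p ≤
        (∑ p ∈ (F0 ×ˢ F0).filter (fun p : (Fin d → ℤ) × (Fin d → ℤ) => p.1 ≠ p.2), fp d p +
         ∑ p ∈ (F1 ×ˢ F1).filter (fun p : (Fin d → ℤ) × (Fin d → ℤ) => p.1 ≠ p.2), fp d p) +
        (∑ p ∈ (F0 ×ˢ F1).filter (fun p : (Fin d → ℤ) × (Fin d → ℤ) => p.1 ≠ p.2), fp d p +
         ∑ p ∈ (F1 ×ˢ F0).filter (fun p : (Fin d → ℤ) × (Fin d → ℤ) => p.1 ≠ p.2), fp d p) := by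
      calc ∑ p ∈ PF d L (N + 1) T, fp d p ≤ ∑ p ∈ _, fp d p :=
            Finset.sum_le_sum_of_subset_of_nonneg hsub (fun p _ _ => hfp0 p)
        _ ≤ _ := by
            refine le_trans (sum_union_le hfp0) ?_
            exact add_le_add (sum_union_le hfp0) (sum_union_le hfp0)
    have hcr0 := hcross_sum F0 F1 hcardF0 hcardF1 hcross01
    have hcr1 := hcross_sum F1 F0 hcardF1 hcardF0 hcross10
    have harith : 2 * ((2 ^ N * K) ^ 2 * (5 / 6 ^ (N + 1))) ≤ 3 * K ^ 2 := by
      have h46 : (4 : ℝ) ^ N ≤ 6 ^ N := by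
        apply pow_le_pow_left₀ (by norm_num) (by norm_num)
      have h6pos : (0 : ℝ) < 6 ^ (N + 1) := by positivity
      have h24 : (((2 : ℝ) ^ N) ^ 2) = 4 ^ N := by
        rw [← pow_mul, show (4 : ℝ) = 2 ^ 2 by norm_num, ← pow_mul, Nat.mul_comm]
      have e : 2 * ((2 ^ N * K) ^ 2 * (5 / 6 ^ (N + 1))) =
          (10 * ((2 : ℝ) ^ N) ^ 2 / 6 ^ (N + 1)) * K ^ 2 := by
        field_simp; ring
      rw [e]
      have hkey : (10 : ℝ) * ((2 : ℝ) ^ N) ^ 2 / 6 ^ (N + 1) ≤ 3 := by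
        rw [div_le_iff₀ h6pos, h24]
        have e2 : (6 : ℝ) ^ (N + 1) = 6 * 6 ^ N := by ring
        rw [e2]
        nlinarith [h46, pow_pos (by norm_num : (0:ℝ) < 4) N]
      exact mul_le_mul_of_nonneg_right hkey (sq_nonneg K)
    have h2pow : (2 : ℝ) ^ (N + 1) = 2 * 2 ^ N := by ring
    calc ∑ p ∈ PF d L (N + 1) T, fp d p ≤ _ := hstep1
      _ ≤ ((4 * 2 ^ N - 3) * K ^ 2 + (4 * 2 ^ N - 3) * K ^ 2) +
          ((2 ^ N * K) ^ 2 * (5 / 6 ^ (N + 1)) + (2 ^ N * K) ^ 2 * (5 / 6 ^ (N + 1))) := by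
          exact add_le_add (add_le_add hdiag0 hdiag1) (add_le_add hcr0 hcr1)
      _ ≤ (4 * 2 ^ (N + 1) - 3) * K ^ 2 := by rw [h2pow]; nlinarith [harith, sq_nonneg K]

end P6

theorem sum_pairs_inv_dist_pow_le (d : ℕ) (hd : 3 ≤ d) (L : ℕ) (hL : 1 ≤ L) :
    ∃ C : ℝ, 0 < C ∧
      ∀ (N : ℕ) (T : List Bool → (Fin d → ℤ)), IsProperEmbedding d L N T →
        (1 / 2 : ℝ) *
          (∑ᶠ p ∈ {p : (Fin d → ℤ) × (Fin d → ℤ) |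
              p.1 ∈ leafBoxes d L N T ∧ p.2 ∈ leafBoxes d L N T ∧ p.1 ≠ p.2},
            (normInf (p.1 - p.2) : ℝ) ^ ((2 : ℤ) - (d : ℤ))) ≤ C * 2 ^ N := by
  classical
  have hKpos : (0 : ℝ) < (((4 * L + 1) ^ d : ℕ) : ℝ) := by
    exact_mod_cast pow_pos (by omega : 0 < 4 * L + 1) d
  refine ⟨2 * (((4 * L + 1) ^ d : ℕ) : ℝ) ^ 2, by positivity, ?_⟩
  intro N T hT
  have hset : {p : (Fin d → ℤ) × (Fin d → ℤ) |
      p.1 ∈ leafBoxes d L N T ∧ p.2 ∈ leafBoxes d L N T ∧ p.1 ≠ p.2} =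
      ↑(P6.PF d L N T) := by
    ext p
    simp only [Set.mem_setOf_eq, P6.coe_AF d L N T, Finset.mem_coe, P6.PF,
      Finset.mem_filter, Finset.mem_product]
    tauto
  rw [hset, finsum_mem_coe_finset]
  have hm := P6.main hd hL N T hT
  simp only [P6.fp] at hm
  have h2N : (0 : ℝ) < 2 ^ N := by positivity
  nlinarith [hm, sq_nonneg (((4 * L + 1) ^ d : ℕ) : ℝ), hKpos]
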